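/- Let Γ be a countable group acting by homeomorphisms on a nonempty connected topological manifold Ũ whose set Ũ₀ of points with trivial stabilizer is open, connected and dense, and let Δ be a countable group acting by homeomorphisms on a nonempty connected topological manifold Ṽ whose set Ṽ₀ of points with trivial stabilizer is open, connected and dense. Let f̃ : Ũ → Ṽ be a homeomorphism that descends to a bijection of orbit spaces, i.e. for all u, u' ∈ Ũ the points f̃(u) and f̃(u') lie in the same Δ-orbit if and only if u and u' lie in the same Γ-orbit. Then there exists a group isomorphism F : Γ → Δ such that f̃(γ • u) = F(γ) • f̃(u) for all γ ∈ Γ and all u ∈ Ũ. (This is the 'green lemma'.) -/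

import Mathlib

open Set

/-- A connected, locally connected, locally compact Hausdorff space cannot be partitioned
into countably many pairwise disjoint closed sets except trivially. -/
lemma exists_eq_univ_of_countable_disjoint_closed_cover
    {X : Type*} [TopologicalSpace X] [T2Space X] [LocallyCompactSpace X]
    [LocallyConnectedSpace X] [ConnectedSpace X]
    {ι : Type*} [Countable ι] {C : ι → Set X}
    (hclosed : ∀ i, IsClosed (C i)) (hdisj : Pairwise (Function.onFun Disjoint C))
    (hcover : ⋃ i, C i = univ) : ∃ i, C i = univ := by
  -- the "bad" set of points not in any interior
  set B : Set X := (⋃ i, interior (C i))ᶜ with hBdef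
  have hBclosed : IsClosed B := (isOpen_iUnion fun i => isOpen_interior).isClosed_compl
  have hmem : ∀ x : X, ∃ i, x ∈ C i := by
    intro x
    have : x ∈ ⋃ i, C i := hcover ▸ mem_univ x
    exact mem_iUnion.mp this
  have hdisj' : ∀ {i j : ι} {x : X}, x ∈ C i → x ∈ C j → i = j := by
    intro i j x hi hj
    by_contra hne
    exact (hdisj hne).le_bot ⟨hi, hj⟩
  -- points of B that are in some C j but not in its interior: key classification
  have hBmem : ∀ {x : X} {j : ι}, x ∈ C j → x ∉ B → x ∈ interior (C j) := by
    intro x j hxj hxB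
    have : x ∈ ⋃ i, interior (C i) := not_not.mp hxB
    obtain ⟨k, hk⟩ := mem_iUnion.mp this
    have : k = j := hdisj' (interior_subset hk) hxj
    exact this ▸ hk
  have hBempty : B = ∅ := by
    by_contra hBne
    have hBne' : B.Nonempty := nonempty_iff_ne_empty.mpr hBne
    -- B is a closed subspace: locally compact Hausdorff, hence Baire
    haveI : Nonempty B := hBne'.to_subtype
    haveI : LocallyCompactSpace B := hBclosed.locallyCompactSpace
    have hcoverB : ⋃ i, ((↑) ⁻¹' C i : Set B) = univ := by
      ext x
      simp only [mem_iUnion, mem_univ, iff_true, mem_preimage]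
      exact hmem x
    obtain ⟨i, hint⟩ := nonempty_interior_of_iUnion_of_closed
      (fun i => (hclosed i).preimage continuous_subtype_val) hcoverB
    obtain ⟨x, hx⟩ := hint
    -- translate subtype interior into an open set of X
    rw [mem_interior_iff_mem_nhds, nhds_subtype_eq_comap, Filter.mem_comap] at hx
    obtain ⟨t, htx, ht⟩ := hx
    -- O := interior t
    have hxO : (x : X) ∈ interior t := mem_interior_iff_mem_nhds.mpr htx
    have hOB : interior t ∩ B ⊆ C i := by
      intro y ⟨hyt, hyB⟩
      exact ht (show ((⟨y, hyB⟩ : B) : X) ∈ t from interior_subset hyt)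
    -- shrink to a connected open neighborhood O'
    obtain ⟨O', ⟨hO'open, hxO', hO'conn⟩, hO'sub⟩ :=
      (LocallyConnectedSpace.open_connected_basis (x : X)).mem_iff.mp
        (isOpen_interior.mem_nhds hxO)
    have hxB : (x : X) ∈ B := x.2
    have hxCi : (x : X) ∈ C i := hOB ⟨hxO, hxB⟩
    have hO'B : O' ∩ B ⊆ C i := fun y ⟨hy1, hy2⟩ => hOB ⟨hO'sub hy1, hy2⟩
    -- every other piece is disjoint from O'
    have hkey : ∀ j, j ≠ i → O' ∩ C j = ∅ := by
      intro j hji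
      by_contra hne
      have hne' : (O' ∩ C j).Nonempty := nonempty_iff_ne_empty.mpr hne
      -- every point of O' ∩ C j is in the interior of C j
      have hsub : O' ∩ C j ⊆ interior (C j) := by
        intro z ⟨hzO', hzCj⟩
        by_cases hzB : z ∈ B
        · exact absurd (hdisj' (hO'B ⟨hzO', hzB⟩) hzCj) (Ne.symm hji)
        · exact hBmem hzCj hzB
      -- O' is covered by the disjoint open sets interior (C j) and (C j)ᶜ
      have hcov : O' ⊆ interior (C j) ∪ (C j)ᶜ := by
        intro z hz
        by_cases hzj : z ∈ C j
        · exact Or.inl (hsub ⟨hz, hzj⟩)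
        · exact Or.inr hzj
      have hOsub : O' ⊆ interior (C j) :=
        hO'conn.isPreconnected.subset_left_of_subset_union
          isOpen_interior (hclosed j).isOpen_compl
          (disjoint_compl_right.mono_left interior_subset) hcov
          (hne'.mono (fun z hz => ⟨hz.1, hsub hz⟩))
      exact (Ne.symm hji) (hdisj' hxCi (interior_subset (hOsub hxO')))
    -- hence O' ⊆ C i, so x ∈ interior (C i), contradicting x ∈ B
    have hO'Ci : O' ⊆ C i := by
      intro z hz
      obtain ⟨j, hj⟩ := hmem z
      rcases eq_or_ne j i with rfl | hji
      · exact hj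
      · have hzm : z ∈ O' ∩ C j := ⟨hz, hj⟩
        rw [hkey j hji] at hzm
        exact hzm.elim
    have : (x : X) ∈ interior (C i) := mem_interior.mpr ⟨O', hO'Ci, hO'open, hxO'⟩
    exact hxB (mem_iUnion.mpr ⟨i, this⟩)
  -- with B empty, every piece is clopen
  have hopen : ∀ i, C i = interior (C i) := by
    intro i
    refine subset_antisymm (fun x hx => ?_) interior_subset
    have hxB : x ∉ B := by rw [hBempty]; exact notMem_empty x
    exact hBmem hx hxB
  obtain ⟨x⟩ := (inferInstance : Nonempty X)
  obtain ⟨i, hi⟩ := hmem x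
  refine ⟨i, IsClopen.eq_univ ⟨hclosed i, ?_⟩ ⟨x, hi⟩⟩
  rw [hopen i]; exact isOpen_interior

/-- If a point has trivial stabilizer, group elements acting identically on it are equal. -/
lemma stab_bot_smul_injective {Γ : Type*} [Group Γ] {U : Type*} [MulAction Γ U] {x : U}
    (hx : MulAction.stabilizer Γ x = ⊥) {γ γ' : Γ} (h : γ • x = γ' • x) : γ = γ' := by
  have : (γ'⁻¹ * γ) ∈ MulAction.stabilizer Γ x := by
    rw [MulAction.mem_stabilizer_iff, mul_smul, h, inv_smul_smul]
  rw [hx, Subgroup.mem_bot, inv_mul_eq_one] at this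
  exact this.symm

/-- Rigidity: a continuous self-map moving every point within its orbit is
given by a single group element, provided the free part is open, connected and dense. -/
lemma rigidity {Γ : Type*} [Group Γ] [Countable Γ] {U : Type*} [TopologicalSpace U]
    [T2Space U] [LocallyCompactSpace U] [LocallyConnectedSpace U]
    [MulAction Γ U] [ContinuousConstSMul Γ U]
    (hopen : IsOpen {u : U | MulAction.stabilizer Γ u = ⊥})
    (hconn : IsConnected {u : U | MulAction.stabilizer Γ u = ⊥})
    (hdense : Dense {u : U | MulAction.stabilizer Γ u = ⊥})
    (h : U → U) (hcont : Continuous h) (horb : ∀ u, ∃ γ : Γ, h u = γ • u) :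
    ∃ γ : Γ, ∀ u, h u = γ • u := by
  set U₀ := {u : U | MulAction.stabilizer Γ u = ⊥} with hU₀def
  haveI : ConnectedSpace U₀ := Subtype.connectedSpace hconn
  haveI : LocallyCompactSpace U₀ := hopen.locallyCompactSpace
  haveI : LocallyConnectedSpace U₀ := hopen.locallyConnectedSpace
  set C : Γ → Set U₀ := fun γ => {x : U₀ | h (x : U) = γ • (x : U)} with hCdef
  have hclosed : ∀ γ, IsClosed (C γ) := fun γ =>
    isClosed_eq (hcont.comp continuous_subtype_val)
      ((continuous_const_smul γ).comp continuous_subtype_val)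
  have hdisj : Pairwise (Function.onFun Disjoint C) := by
    intro γ γ' hne
    rw [Function.onFun, Set.disjoint_left]
    rintro x hx hx'
    exact hne (stab_bot_smul_injective x.2 (hx ▸ hx' : γ • (x : U) = γ' • (x : U)))
  have hcover : ⋃ γ, C γ = Set.univ := by
    ext x
    simp only [Set.mem_iUnion, Set.mem_univ, iff_true]
    obtain ⟨γ, hγ⟩ := horb (x : U)
    exact ⟨γ, hγ⟩
  obtain ⟨γ, hγ⟩ := exists_eq_univ_of_countable_disjoint_closed_cover hclosed hdisj hcover
  refine ⟨γ, ?_⟩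
  have heq : h = fun u => γ • u := by
    refine Continuous.ext_on hdense hcont (continuous_const_smul γ) ?_
    intro u hu
    exact (Set.eq_univ_iff_forall.mp hγ ⟨u, hu⟩ : _)
  exact fun u => congrFun heq u

/-- The "green lemma": a homeomorphism between two models which descends to a
bijection of the orbit spaces intertwines the two group actions via a group
isomorphism `F : Γ ≃* Δ`. -/
theorem green_lemma {n m : ℕ} {Γ Δ : Type*} [Group Γ] [Countable Γ]
    [Group Δ] [Countable Δ]
    {U : Type*} [TopologicalSpace U] [T2Space U]
    [ChartedSpace (EuclideanSpace ℝ (Fin n)) U]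
    [Nonempty U] [ConnectedSpace U]
    [MulAction Γ U] [ContinuousConstSMul Γ U]
    {V : Type*} [TopologicalSpace V] [T2Space V]
    [ChartedSpace (EuclideanSpace ℝ (Fin m)) V]
    [Nonempty V] [ConnectedSpace V]
    [MulAction Δ V] [ContinuousConstSMul Δ V]
    (hU₀open : IsOpen {u : U | MulAction.stabilizer Γ u = ⊥})
    (hU₀conn : IsConnected {u : U | MulAction.stabilizer Γ u = ⊥})
    (hU₀dense : Dense {u : U | MulAction.stabilizer Γ u = ⊥})
    (hV₀open : IsOpen {v : V | MulAction.stabilizer Δ v = ⊥})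
    (hV₀conn : IsConnected {v : V | MulAction.stabilizer Δ v = ⊥})
    (hV₀dense : Dense {v : V | MulAction.stabilizer Δ v = ⊥})
    (f : U ≃ₜ V)
    (hdesc : ∀ u u' : U, (∃ δ : Δ, f u' = δ • f u) ↔ (∃ γ : Γ, u' = γ • u)) :
    ∃ F : Γ ≃* Δ, ∀ (γ : Γ) (u : U), f (γ • u) = F γ • f u := by
  haveI : LocallyCompactSpace U := ChartedSpace.locallyCompactSpace (EuclideanSpace ℝ (Fin n)) U
  haveI : LocallyConnectedSpace U := ChartedSpace.locallyConnectedSpace (EuclideanSpace ℝ (Fin n)) U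
  haveI : LocallyCompactSpace V := ChartedSpace.locallyCompactSpace (EuclideanSpace ℝ (Fin m)) V
  haveI : LocallyConnectedSpace V := ChartedSpace.locallyConnectedSpace (EuclideanSpace ℝ (Fin m)) V
  -- basepoints with trivial stabilizers
  obtain ⟨u₀, hu₀⟩ := hU₀conn.nonempty
  obtain ⟨v₀, hv₀⟩ := hV₀conn.nonempty
  -- the forward direction: each γ induces a unique δ
  have hF : ∀ γ : Γ, ∃ δ : Δ, ∀ v : V, f (γ • f.symm v) = δ • v := by
    intro γ
    refine rigidity hV₀open hV₀conn hV₀dense (fun v => f (γ • f.symm v))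
      (f.continuous.comp ((continuous_const_smul γ).comp f.symm.continuous)) ?_
    intro v
    obtain ⟨δ, hδ⟩ := (hdesc (f.symm v) (γ • f.symm v)).mpr ⟨γ, rfl⟩
    refine ⟨δ, ?_⟩
    show f (γ • f.symm v) = δ • v
    rw [hδ, f.apply_symm_apply]
  -- the backward direction: each δ induces a unique γ
  have hG : ∀ δ : Δ, ∃ γ : Γ, ∀ u : U, f.symm (δ • f u) = γ • u := by
    intro δ
    refine rigidity hU₀open hU₀conn hU₀dense (fun u => f.symm (δ • f u))
      (f.symm.continuous.comp ((continuous_const_smul δ).comp f.continuous)) ?_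
    intro u
    obtain ⟨γ, hγ⟩ := (hdesc u (f.symm (δ • f u))).mp ⟨δ, by rw [f.apply_symm_apply]⟩
    exact ⟨γ, hγ⟩
  choose F0 hF0 using hF
  choose G0 hG0 using hG
  -- the key intertwining property, in terms of points of U
  have hF0' : ∀ (γ : Γ) (u : U), f (γ • u) = F0 γ • f u := by
    intro γ u
    have := hF0 γ (f u)
    rwa [f.symm_apply_apply] at this
  -- G0 is a two-sided inverse of F0
  have hleft : Function.LeftInverse G0 F0 := by
    intro γ
    have h1 : f.symm (F0 γ • f u₀) = G0 (F0 γ) • u₀ := hG0 (F0 γ) u₀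
    have h2 : f.symm (F0 γ • f u₀) = γ • u₀ := by
      rw [← hF0' γ u₀, f.symm_apply_apply]
    exact stab_bot_smul_injective hu₀ (h1.symm.trans h2)
  have hright : Function.RightInverse G0 F0 := by
    intro δ
    have h1 : f (G0 δ • f.symm v₀) = F0 (G0 δ) • v₀ := hF0 (G0 δ) v₀
    have h2 : f (G0 δ • f.symm v₀) = δ • v₀ := by
      have := hG0 δ (f.symm v₀)
      rw [f.apply_symm_apply] at this
      rw [← this, f.apply_symm_apply]
    exact stab_bot_smul_injective hv₀ (h1.symm.trans h2)
  -- F0 is multiplicative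
  have hmul : ∀ γ₁ γ₂ : Γ, F0 (γ₁ * γ₂) = F0 γ₁ * F0 γ₂ := by
    intro γ₁ γ₂
    refine stab_bot_smul_injective hv₀ ?_
    have h1 : f ((γ₁ * γ₂) • f.symm v₀) = F0 (γ₁ * γ₂) • v₀ := hF0 _ _
    have h2 : f ((γ₁ * γ₂) • f.symm v₀) = (F0 γ₁ * F0 γ₂) • v₀ := by
      rw [mul_smul, hF0' γ₁ (γ₂ • f.symm v₀), hF0 γ₂ v₀, mul_smul]
    rw [← h1, h2]
  exact ⟨MulEquiv.mk' ⟨F0, G0, hleft, hright⟩ fun γ₁ γ₂ => hmul γ₁ γ₂, hF0'⟩
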